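/- Let X be a finite set of distinct points in ℙ¹×ℙ¹ over k containing points P₁×Q₁ and P₂×Q₂ with P₁ ≠ P₂ and Q₁ ≠ Q₂ such that neither P₁×Q₂ nor P₂×Q₁ belongs to X. Suppose moreover that P₁×Q₁ is the only point of X with first coordinate P₁ and the only point of X with second coordinate Q₁ (i.e., |X_{P₁,1}| = |X_{Q₁,2}| = 1). Then deg_X(P₁×Q₁) contains at least two elements. -/

import Mathlib

/-- `ℙ¹` over `k`, as the projectivization of `k²`. -/
abbrev Proj1 (k : Type*) [Field k] := Projectivization k (Fin 2 → k)

/-- The bigraded coordinate ring `R = k[x₀,x₁,y₀,y₁]` of `ℙ¹ × ℙ¹`,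
with the `x` variables indexed by `Sum.inl` and the `y` variables by `Sum.inr`. -/
abbrev BiPoly (k : Type*) [Field k] := MvPolynomial (Fin 2 ⊕ Fin 2) k

variable {k : Type*} [Field k]

/-- `F` is bihomogeneous of bidegree `d = (d₁, d₂)`: every monomial of `F` has total degree
`d₁` in `x₀,x₁` and total degree `d₂` in `y₀,y₁`. -/
def IsBihomogeneous (F : BiPoly k) (d : ℕ × ℕ) : Prop :=
  ∀ m ∈ F.support,
    (∑ i : Fin 2, m (Sum.inl i)) = d.1 ∧ (∑ i : Fin 2, m (Sum.inr i)) = d.2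

/-- `F` vanishes at the point `P` of `ℙ¹ × ℙ¹`, i.e. at every pair of representatives. -/
def VanishesAt (F : BiPoly k) (P : Proj1 k × Proj1 k) : Prop :=
  ∀ (p q : Fin 2 → k) (hp : p ≠ 0) (hq : q ≠ 0),
    Projectivization.mk k p hp = P.1 → Projectivization.mk k q hq = P.2 →
    MvPolynomial.eval (Sum.elim p q) F = 0

/-- `F` is a separator of `P` in `X` of bidegree `d`: it is bihomogeneous of bidegree `d`,
does not vanish at `P`, and vanishes at every other point of `X`. -/
def IsSeparator (X : Finset (Proj1 k × Proj1 k)) (P : Proj1 k × Proj1 k)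
    (F : BiPoly k) (d : ℕ × ℕ) : Prop :=
  IsBihomogeneous F d ∧ ¬ VanishesAt F P ∧ ∀ Q ∈ X, Q ≠ P → VanishesAt F Q

/-- The set of bidegrees of separators of `P` in `X`. -/
def sepDegrees (X : Finset (Proj1 k × Proj1 k)) (P : Proj1 k × Proj1 k) : Set (ℕ × ℕ) :=
  {d | ∃ F : BiPoly k, IsSeparator X P F d}

/-- `deg_X(P)`: the set of minimal elements, with respect to the componentwise partial
order on `ℕ × ℕ`, of the set of bidegrees of separators of `P` in `X`. -/
def degSet (X : Finset (Proj1 k × Proj1 k)) (P : Proj1 k × Proj1 k) : Set (ℕ × ℕ) :=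
  {d | d ∈ sepDegrees X P ∧ ∀ e ∈ sepDegrees X P, e ≤ d → e = d}

/-- The ideal `I_X` of all polynomials vanishing at (every representative of)
every point of `X`. -/
noncomputable def vanishingIdeal (X : Finset (Proj1 k × Proj1 k)) : Ideal (BiPoly k) where
  carrier := {F | ∀ P ∈ X, VanishesAt F P}
  zero_mem' := by
    intro P _ p q hp hq _ _
    simp
  add_mem' := by
    intro F G hF hG P hP p q hp hq h1 h2
    have h := hF P hP p q hp hq h1 h2
    have h' := hG P hP p q hp hq h1 h2
    simp [h, h']
  smul_mem' := by
    intro c F hF P hP p q hp hq h1 h2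
    have h := hF P hP p q hp hq h1 h2
    simp [smul_eq_mul, h]

/-- Property (*): whenever `P×Q, P'×Q' ∈ X` with `P ≠ P'` and `Q ≠ Q'`, at least one of
`P×Q'` and `P'×Q` is in `X`. -/
def PropertyStar (X : Finset (Proj1 k × Proj1 k)) : Prop :=
  ∀ P Q P' Q' : Proj1 k, (P, Q) ∈ X → (P', Q') ∈ X → P ≠ P' → Q ≠ Q' →
    (P, Q') ∈ X ∨ (P', Q) ∈ X

/-- The depth of a commutative ring `A` with respect to an ideal `m`: the supremum of the
lengths of regular sequences on `A` consisting of elements of `m`. -/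
noncomputable def depthWrt (A : Type*) [CommRing A] (m : Ideal A) : ℕ :=
  sSup {n | ∃ rs : List A, rs.length = n ∧ (∀ r ∈ rs, r ∈ m) ∧
    RingTheory.Sequence.IsRegular A rs}

/-- The irrelevant maximal ideal `(x₀,x₁,y₀,y₁)` of `R/I_X`. -/
noncomputable def irrelevantIdeal (X : Finset (Proj1 k × Proj1 k)) :
    Ideal (BiPoly k ⧸ vanishingIdeal X) :=
  (Ideal.span (Set.range (MvPolynomial.X : (Fin 2 ⊕ Fin 2) → BiPoly k))).map
    (Ideal.Quotient.mk (vanishingIdeal X))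

/-- `X` is arithmetically Cohen–Macaulay: `depth (R/I_X) = 2`. -/
def IsACM (X : Finset (Proj1 k × Proj1 k)) : Prop :=
  depthWrt (BiPoly k ⧸ vanishingIdeal X) (irrelevantIdeal X) = 2

open Classical in
/-- The number of points of `X` with first coordinate `P` (the cardinality of `X_{P,1}`). -/
noncomputable def fiber1Card (X : Finset (Proj1 k × Proj1 k)) (P : Proj1 k) : ℕ :=
  (X.filter fun T => T.1 = P).card

open Classical in
/-- The number of points of `X` with second coordinate `Q` (the cardinality of `X_{Q,2}`). -/
noncomputable def fiber2Card (X : Finset (Proj1 k × Proj1 k)) (Q : Proj1 k) : ℕ :=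
  (X.filter fun T => T.2 = Q).card

open Classical in
/-- The number of distinct first coordinates of points of `X`, i.e. `|π₁(X)|`. -/
noncomputable def proj1Card (X : Finset (Proj1 k × Proj1 k)) : ℕ :=
  (X.image Prod.fst).card

open Classical in
/-- The number of distinct second coordinates of points of `X`, i.e. `|π₂(X)|`. -/
noncomputable def proj2Card (X : Finset (Proj1 k × Proj1 k)) : ℕ :=
  (X.image Prod.snd).card

/-- linear form in x variables attached to a vector v -/
noncomputable def linP (v : Fin 2 → k) : BiPoly k :=
  MvPolynomial.C (v 1) * MvPolynomial.X (Sum.inl 0) -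
  MvPolynomial.C (v 0) * MvPolynomial.X (Sum.inl 1)

noncomputable def linQ (v : Fin 2 → k) : BiPoly k :=
  MvPolynomial.C (v 1) * MvPolynomial.X (Sum.inr 0) -
  MvPolynomial.C (v 0) * MvPolynomial.X (Sum.inr 1)

lemma eval_linP (v p q : Fin 2 → k) :
    MvPolynomial.eval (Sum.elim p q) (linP v) = v 1 * p 0 - v 0 * p 1 := by
  simp [linP]

lemma eval_linQ (v p q : Fin 2 → k) :
    MvPolynomial.eval (Sum.elim p q) (linQ v) = v 1 * q 0 - v 0 * q 1 := by
  simp [linQ]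

lemma vec_ne_zero_iff (v : Fin 2 → k) : v ≠ 0 ↔ v 0 ≠ 0 ∨ v 1 ≠ 0 := by
  rw [Function.ne_iff]
  constructor
  · rintro ⟨i, hi⟩
    fin_cases i
    · exact Or.inl hi
    · exact Or.inr hi
  · rintro (h | h)
    exacts [⟨0, h⟩, ⟨1, h⟩]

lemma det_zero_iff (v p : Fin 2 → k) (hv : v ≠ 0) (hp : p ≠ 0) :
    v 1 * p 0 - v 0 * p 1 = 0 ↔
      Projectivization.mk k p hp = Projectivization.mk k v hv := by
  rw [Projectivization.mk_eq_mk_iff' k p v hp hv]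
  constructor
  · intro h
    rw [sub_eq_zero] at h
    rcases (vec_ne_zero_iff v).1 hv with h0 | h1
    · refine ⟨p 0 / v 0, funext fun i => ?_⟩
      fin_cases i
      · simp [div_mul_cancel₀, h0]
      · show p 0 / v 0 * v 1 = p 1
        rw [div_mul_eq_mul_div, div_eq_iff h0]
        linear_combination h
    · refine ⟨p 1 / v 1, funext fun i => ?_⟩
      fin_cases i
      · show p 1 / v 1 * v 0 = p 0
        rw [div_mul_eq_mul_div, div_eq_iff h1]
        linear_combination -h
      · simp [div_mul_cancel₀, h1]
  · rintro ⟨a, rfl⟩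
    simp [Pi.smul_apply, smul_eq_mul]; ring

lemma isBihom_one : IsBihomogeneous (1 : BiPoly k) (0, 0) := by
  intro m hm
  rw [MvPolynomial.mem_support_iff, MvPolynomial.coeff_one] at hm
  split_ifs at hm with h
  · subst h; simp
  · simp at hm

lemma isBihom_mul {F G : BiPoly k} {d e : ℕ × ℕ}
    (hF : IsBihomogeneous F d) (hG : IsBihomogeneous G e) :
    IsBihomogeneous (F * G) (d + e) := by
  classical
  intro m hm
  have h := MvPolynomial.support_mul F G hm
  rw [Finset.mem_add] at h
  obtain ⟨m₁, hm₁, m₂, hm₂, rfl⟩ := h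
  obtain ⟨h1a, h1b⟩ := hF m₁ hm₁
  obtain ⟨h2a, h2b⟩ := hG m₂ hm₂
  constructor <;>
    simp [Finsupp.add_apply, Finset.sum_add_distrib, h1a, h1b, h2a, h2b]

lemma isBihom_linP (v : Fin 2 → k) : IsBihomogeneous (linP v) (1, 0) := by
  intro m hm
  rw [MvPolynomial.mem_support_iff] at hm
  have key : m = Finsupp.single (Sum.inl 0) 1 ∨ m = Finsupp.single (Sum.inl 1) 1 := by
    by_contra hc
    push_neg at hc
    apply hm
    simp only [linP, MvPolynomial.coeff_sub, MvPolynomial.coeff_C_mul, MvPolynomial.coeff_X',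
      mul_ite, mul_one, mul_zero]
    rw [if_neg fun h => hc.1 h.symm, if_neg fun h => hc.2 h.symm]
    simp
  rcases key with rfl | rfl <;>
    exact ⟨by simp [Fin.sum_univ_two, Finsupp.single_apply], by
      simp [Fin.sum_univ_two, Finsupp.single_apply]⟩

lemma isBihom_linQ (v : Fin 2 → k) : IsBihomogeneous (linQ v) (0, 1) := by
  intro m hm
  rw [MvPolynomial.mem_support_iff] at hm
  have key : m = Finsupp.single (Sum.inr 0) 1 ∨ m = Finsupp.single (Sum.inr 1) 1 := by
    by_contra hc
    push_neg at hc
    apply hm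
    simp only [linQ, MvPolynomial.coeff_sub, MvPolynomial.coeff_C_mul, MvPolynomial.coeff_X',
      mul_ite, mul_one, mul_zero]
    rw [if_neg fun h => hc.1 h.symm, if_neg fun h => hc.2 h.symm]
    simp
  rcases key with rfl | rfl <;>
    exact ⟨by simp [Fin.sum_univ_two, Finsupp.single_apply], by
      simp [Fin.sum_univ_two, Finsupp.single_apply]⟩

lemma isBihom_prodP {α : Type*} {S : Finset α} {f : α → BiPoly k}
    (h : ∀ a ∈ S, IsBihomogeneous (f a) (1, 0)) :
    IsBihomogeneous (∏ a ∈ S, f a) (S.card, 0) := by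
  classical
  induction S using Finset.induction_on with
  | empty => simpa using isBihom_one
  | @insert a S ha ih =>
    rw [Finset.prod_insert ha, Finset.card_insert_of_notMem ha]
    have h1 := h a (Finset.mem_insert_self a S)
    have h2 := ih fun b hb => h b (Finset.mem_insert_of_mem hb)
    have := isBihom_mul h1 h2
    convert this using 2 <;> simp [add_comm]

lemma isBihom_prodQ {α : Type*} {S : Finset α} {f : α → BiPoly k}
    (h : ∀ a ∈ S, IsBihomogeneous (f a) (0, 1)) :
    IsBihomogeneous (∏ a ∈ S, f a) (0, S.card) := by
  classical
  induction S using Finset.induction_on with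
  | empty => simpa using isBihom_one
  | @insert a S ha ih =>
    rw [Finset.prod_insert ha, Finset.card_insert_of_notMem ha]
    have h1 := h a (Finset.mem_insert_self a S)
    have h2 := ih fun b hb => h b (Finset.mem_insert_of_mem hb)
    have := isBihom_mul h1 h2
    convert this using 2 <;> simp [add_comm]

lemma exists_sep_P (X : Finset (Proj1 k × Proj1 k)) (P₁ Q₁ : Proj1 k)
    (huniq : ∀ T ∈ X, T ≠ (P₁, Q₁) → T.1 ≠ P₁) :
    ∃ n, ((n, 0) : ℕ × ℕ) ∈ sepDegrees X (P₁, Q₁) := by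
  classical
  set S := (X.image Prod.fst).erase P₁ with hS
  refine ⟨S.card, ⟨∏ P ∈ S, linP P.rep, ?_, ?_, ?_⟩⟩
  · exact isBihom_prodP fun a _ => isBihom_linP _
  · intro hvan
    have h0 := hvan P₁.rep Q₁.rep P₁.rep_nonzero Q₁.rep_nonzero
      (Projectivization.mk_rep _) (Projectivization.mk_rep _)
    rw [map_prod] at h0
    obtain ⟨P, hPS, hP0⟩ := Finset.prod_eq_zero_iff.1 h0
    rw [eval_linP] at hP0
    have hmk := (det_zero_iff P.rep P₁.rep P.rep_nonzero P₁.rep_nonzero).1 hP0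
    rw [Projectivization.mk_rep, Projectivization.mk_rep] at hmk
    exact (Finset.mem_erase.1 hPS).1 hmk.symm
  · intro T hT hTne p q hp hq hp1 hq1
    rw [map_prod]
    have hT1 : T.1 ∈ S :=
      Finset.mem_erase.2 ⟨huniq T hT hTne, Finset.mem_image_of_mem Prod.fst hT⟩
    refine Finset.prod_eq_zero hT1 ?_
    rw [eval_linP]
    exact (det_zero_iff T.1.rep p T.1.rep_nonzero hp).2
      (by rw [hp1, Projectivization.mk_rep])

lemma exists_sep_Q (X : Finset (Proj1 k × Proj1 k)) (P₁ Q₁ : Proj1 k)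
    (huniq : ∀ T ∈ X, T ≠ (P₁, Q₁) → T.2 ≠ Q₁) :
    ∃ n, ((0, n) : ℕ × ℕ) ∈ sepDegrees X (P₁, Q₁) := by
  classical
  set S := (X.image Prod.snd).erase Q₁ with hS
  refine ⟨S.card, ⟨∏ Q ∈ S, linQ Q.rep, ?_, ?_, ?_⟩⟩
  · exact isBihom_prodQ fun a _ => isBihom_linQ _
  · intro hvan
    have h0 := hvan P₁.rep Q₁.rep P₁.rep_nonzero Q₁.rep_nonzero
      (Projectivization.mk_rep _) (Projectivization.mk_rep _)
    rw [map_prod] at h0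
    obtain ⟨Q, hQS, hQ0⟩ := Finset.prod_eq_zero_iff.1 h0
    rw [eval_linQ] at hQ0
    have hmk := (det_zero_iff Q.rep Q₁.rep Q.rep_nonzero Q₁.rep_nonzero).1 hQ0
    rw [Projectivization.mk_rep, Projectivization.mk_rep] at hmk
    exact (Finset.mem_erase.1 hQS).1 hmk.symm
  · intro T hT hTne p q hp hq hp1 hq1
    rw [map_prod]
    have hT2 : T.2 ∈ S :=
      Finset.mem_erase.2 ⟨huniq T hT hTne, Finset.mem_image_of_mem Prod.snd hT⟩
    refine Finset.prod_eq_zero hT2 ?_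
    rw [eval_linQ]
    exact (det_zero_iff T.2.rep q T.2.rep_nonzero hq).2
      (by rw [hq1, Projectivization.mk_rep])

lemma not_sep_zero (X : Finset (Proj1 k × Proj1 k)) (P₁ Q₁ P₂ Q₂ : Proj1 k)
    (h₂ : (P₂, Q₂) ∈ X) (hne : ((P₂, Q₂) : Proj1 k × Proj1 k) ≠ (P₁, Q₁)) :
    ((0, 0) : ℕ × ℕ) ∉ sepDegrees X (P₁, Q₁) := by
  rintro ⟨F, hbih, hnv, hv⟩
  apply hnv
  intro p q hp hq hp1 hq1
  have hconst : ∀ r : (Fin 2 ⊕ Fin 2) → k,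
      MvPolynomial.eval r F = MvPolynomial.coeff 0 F := by
    intro r
    rw [MvPolynomial.eval_eq]
    have hsupp : F.support ⊆ {0} := by
      intro m hm
      obtain ⟨ha, hb⟩ := hbih m hm
      have hz : ∀ j, m j = 0 := by
        rintro (i | i)
        · exact Finset.sum_eq_zero_iff.1 ha i (Finset.mem_univ i)
        · exact Finset.sum_eq_zero_iff.1 hb i (Finset.mem_univ i)
      exact Finset.mem_singleton.2 (Finsupp.ext hz)
    rcases Finset.subset_singleton_iff.1 hsupp with h | h
    · rw [h, Finset.sum_empty,
        MvPolynomial.notMem_support_iff.1 (by rw [h]; exact Finset.notMem_empty _)]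
    · rw [h, Finset.sum_singleton]; simp
  have h2 := hv (P₂, Q₂) h₂ hne P₂.rep Q₂.rep P₂.rep_nonzero Q₂.rep_nonzero
    (Projectivization.mk_rep _) (Projectivization.mk_rep _)
  rw [hconst] at h2
  rw [hconst, h2]

/-- Case 1: if `X` fails property (*) at `P₁×Q₁`, `P₂×Q₂` and moreover
`|X_{P₁,1}| = |X_{Q₁,2}| = 1`, then `deg_X(P₁×Q₁)` has at least two elements. -/
theorem degree_nontrivial_of_not_star_case_one [IsAlgClosed k] [CharZero k]
    (X : Finset (Proj1 k × Proj1 k)) (P₁ Q₁ P₂ Q₂ : Proj1 k)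
    (h₁ : (P₁, Q₁) ∈ X) (h₂ : (P₂, Q₂) ∈ X) (hP : P₁ ≠ P₂) (hQ : Q₁ ≠ Q₂)
    (h₁₂ : (P₁, Q₂) ∉ X) (h₂₁ : (P₂, Q₁) ∉ X)
    (hb : fiber1Card X P₁ = 1) (ha : fiber2Card X Q₁ = 1) :
    (degSet X (P₁, Q₁)).Nontrivial := by
  classical
  have hne21 : ((P₂, Q₂) : Proj1 k × Proj1 k) ≠ (P₁, Q₁) := by
    intro h
    exact hP (congrArg Prod.fst h).symm
  have huniq1 : ∀ T ∈ X, T ≠ (P₁, Q₁) → T.1 ≠ P₁ := by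
    intro T hT hTne hT1
    have hmemT : T ∈ X.filter (fun T => T.1 = P₁) := Finset.mem_filter.2 ⟨hT, hT1⟩
    have hmemP : ((P₁, Q₁) : Proj1 k × Proj1 k) ∈ X.filter (fun T => T.1 = P₁) :=
      Finset.mem_filter.2 ⟨h₁, rfl⟩
    exact hTne (Finset.card_le_one.1 (le_of_eq hb) T hmemT _ hmemP)
  have huniq2 : ∀ T ∈ X, T ≠ (P₁, Q₁) → T.2 ≠ Q₁ := by
    intro T hT hTne hT2
    have hmemT : T ∈ X.filter (fun T => T.2 = Q₁) := Finset.mem_filter.2 ⟨hT, hT2⟩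
    have hmemP : ((P₁, Q₁) : Proj1 k × Proj1 k) ∈ X.filter (fun T => T.2 = Q₁) :=
      Finset.mem_filter.2 ⟨h₁, rfl⟩
    exact hTne (Finset.card_le_one.1 (le_of_eq ha) T hmemT _ hmemP)
  have hEa : ∃ n, ((n, 0) : ℕ × ℕ) ∈ sepDegrees X (P₁, Q₁) := exists_sep_P X P₁ Q₁ huniq1
  have hEb : ∃ n, ((0, n) : ℕ × ℕ) ∈ sepDegrees X (P₁, Q₁) := exists_sep_Q X P₁ Q₁ huniq2
  have hzero := not_sep_zero X P₁ Q₁ P₂ Q₂ h₂ hne21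
  set c := Nat.find hEa with hcdef
  set d := Nat.find hEb with hddef
  have hc : ((c, 0) : ℕ × ℕ) ∈ sepDegrees X (P₁, Q₁) := Nat.find_spec hEa
  have hd : ((0, d) : ℕ × ℕ) ∈ sepDegrees X (P₁, Q₁) := Nat.find_spec hEb
  have hc0 : c ≠ 0 := fun h => hzero (h ▸ hc)
  refine ⟨(c, 0), ⟨hc, ?_⟩, (0, d), ⟨hd, ?_⟩, ?_⟩
  · rintro ⟨e1, e2⟩ he hle
    rw [Prod.mk_le_mk] at hle
    have he2 : e2 = 0 := Nat.le_zero.1 hle.2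
    subst he2
    have hge : c ≤ e1 := Nat.find_min' hEa he
    simp [le_antisymm hle.1 hge]
  · rintro ⟨e1, e2⟩ he hle
    rw [Prod.mk_le_mk] at hle
    have he1 : e1 = 0 := Nat.le_zero.1 hle.1
    subst he1
    have hge : d ≤ e2 := Nat.find_min' hEb he
    simp [le_antisymm hle.2 hge]
  · intro h
    rw [Prod.ext_iff] at h
    exact hc0 h.1
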